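/- The umlaut-marginal of a tensor product factorizes: for full-rank bipartite states ρ_{AB} and σ_{A'B'}, the umlaut-marginal of ρ_{AB} ⊗ σ_{A'B'} on BB' equals ρ̈_B ⊗ σ̈_{B'}, where ρ̈_B and σ̈_{B'} are the umlaut-marginals of ρ_{AB} and σ_{A'B'} respectively. -/

import Mathlib

open scoped Kronecker ComplexOrder Classical
open Matrix

noncomputable section

variable {n a b : Type*} [Fintype n] [DecidableEq n]
  [Fintype a] [DecidableEq a] [Fintype b] [DecidableEq b]

/-- Matrix logarithm via continuous functional calculus. -/
def mlog (A : Matrix n n ℂ) : Matrix n n ℂ := cfc Real.log A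

/-- Matrix exponential via continuous functional calculus. -/
def mexp (A : Matrix n n ℂ) : Matrix n n ℂ := cfc Real.exp A

/-- Matrix real power via continuous functional calculus. -/
def mpow (A : Matrix n n ℂ) (α : ℝ) : Matrix n n ℂ := cfc (fun x : ℝ => x ^ α) A

/-- A density operator: positive semidefinite with unit trace. -/
def IsDensity (ρ : Matrix n n ℂ) : Prop := ρ.PosSemidef ∧ ρ.trace = 1

/-- `supp ρ ⊆ supp σ`, expressed as `ker σ ⊆ ker ρ`. -/
def suppLE (ρ σ : Matrix n n ℂ) : Prop := ∀ v : n → ℂ, σ.mulVec v = 0 → ρ.mulVec v = 0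

/-- Umegaki relative entropy, `+∞` on support violation. -/
def relEntropy (ρ σ : Matrix n n ℂ) : EReal :=
  if suppLE ρ σ then (((ρ * (mlog ρ - mlog σ)).trace.re : ℝ) : EReal) else ⊤

/-- Partial trace over the second (B) factor. -/
def ptraceB (ρ : Matrix (a × b) (a × b) ℂ) : Matrix a a ℂ :=
  Matrix.of fun i j => ∑ k : b, ρ (i, k) (j, k)

/-- Partial trace over the first (A) factor. -/
def ptraceA (ρ : Matrix (a × b) (a × b) ℂ) : Matrix b b ℂ :=
  Matrix.of fun k l => ∑ i : a, ρ (i, k) (i, l)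

/-- Quantum umlaut information `U(A;B)_ρ = min_{σ_B} D(ρ_A ⊗ σ_B ‖ ρ_{AB})`. -/
def umlaut (ρ : Matrix (a × b) (a × b) ℂ) : EReal :=
  ⨅ σ : {σ : Matrix b b ℂ // IsDensity σ}, relEntropy (ptraceB ρ ⊗ₖ σ.1) ρ


/-- The operator `X_B = Tr_A[(ρ_A ⊗ 1_B) log ρ_{AB}]`. -/
def Xop (ρ : Matrix (a × b) (a × b) ℂ) : Matrix b b ℂ :=
  ptraceA ((ptraceB ρ ⊗ₖ (1 : Matrix b b ℂ)) * mlog ρ)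

/-- The umlaut-marginal `ρ̈_B = exp(X_B)/Tr[exp(X_B)]`. -/
def umlautMarginal (ρ : Matrix (a × b) (a × b) ℂ) : Matrix b b ℂ :=
  (((mexp (Xop ρ)).trace.re)⁻¹ : ℝ) • mexp (Xop ρ)


/-! ### Auxiliary lemmas -/

section Aux

set_option linter.unusedSectionVars false

lemma spectrum_conj_diag (U : unitary (Matrix n n ℂ)) (d : n → ℝ) :
    spectrum ℝ ((U : Matrix n n ℂ) * diagonal (fun i => (d i : ℂ)) * star (U : Matrix n n ℂ))
      = Set.range d := by
  ext x
  rw [← spectrum.algebraMap_mem_iff ℂ, Unitary.spectrum_star_right_conjugate, spectrum_diagonal]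
  simp only [RCLike.algebraMap_eq_ofReal, Set.mem_range]
  constructor
  · rintro ⟨i, hi⟩
    exact ⟨i, by simpa using hi⟩
  · rintro ⟨i, rfl⟩
    exact ⟨i, rfl⟩

lemma isSelfAdjoint_conj_diag (U : unitary (Matrix n n ℂ)) (d : n → ℝ) :
    _root_.IsSelfAdjoint ((U : Matrix n n ℂ) * diagonal (fun i => (d i : ℂ)) * star (U : Matrix n n ℂ)) := by
  have hd : star (diagonal (fun i => (d i : ℂ))) = diagonal (fun i => (d i : ℂ)) := by
    rw [star_eq_conjTranspose, diagonal_conjTranspose]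
    congr!
    simp [Pi.star_def]
  show star _ = _
  simp only [StarMul.star_mul, star_star, hd, mul_assoc]

/-- cfc of a unitary conjugate of a real diagonal matrix. -/
lemma cfc_conj_diag (U : unitary (Matrix n n ℂ)) (d : n → ℝ) (f : ℝ → ℝ) :
    cfc f ((U : Matrix n n ℂ) * diagonal (fun i => (d i : ℂ)) * star (U : Matrix n n ℂ))
      = (U : Matrix n n ℂ) * diagonal (fun i => (f (d i) : ℂ)) * star (U : Matrix n n ℂ) := by
  set A := (U : Matrix n n ℂ) * diagonal (fun i => (d i : ℂ)) * star (U : Matrix n n ℂ) with hAdef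
  have hA : IsSelfAdjoint A := isSelfAdjoint_conj_diag U d
  have hspec : spectrum ℝ A = Set.range d := spectrum_conj_diag U d
  have hmem : ∀ i, d i ∈ spectrum ℝ A := fun i => hspec ▸ Set.mem_range_self i
  have hfin : (spectrum ℝ A).Finite := Matrix.finite_real_spectrum
  let φ : C(spectrum ℝ A, ℝ) →⋆ₐ[ℝ] Matrix n n ℂ :=
  { toFun := fun g => (U : Matrix n n ℂ) *
      diagonal (RCLike.ofReal ∘ g ∘ (fun i ↦ ⟨d i, hmem i⟩)) * star (U : Matrix n n ℂ)
    map_one' := by simp [Pi.one_def (M := fun _ : n ↦ ℂ)]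
    map_mul' := fun f g => by
      have key {a b c d e f : Matrix n n ℂ} : (a * b * c) * (d * e * f) = a * (b * (c * d) * e) * f := by
        simp only [mul_assoc]
      simp only [key, ContinuousMap.coe_mul, SetLike.coe_mem, Unitary.star_mul_self_of_mem, mul_one,
        diagonal_mul_diagonal, Function.comp_apply]
      congr! with i
      simp
    map_zero' := by simp [Pi.zero_def (M := fun _ : n ↦ ℂ)]
    map_add' := fun f g => by
      simp only [ContinuousMap.coe_add, ← add_mul, ← mul_add, diagonal_add, Function.comp_apply]
      congr! with i
      simp
    commutes' := fun r => by
      simp only [Function.comp_def, algebraMap_apply, smul_eq_mul, mul_one]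
      rw [← mul_one (algebraMap _ _ _), ← Unitary.coe_mul_star_self U,
        ← Algebra.left_comm, Unitary.coe_star, mul_assoc]
      congr!
    map_star' := fun f => by
      simp only [star_trivial, StarMul.star_mul, star_star, star_eq_conjTranspose (diagonal _),
        diagonal_conjTranspose, mul_assoc, Unitary.coe_star, star_star]
      congr!
      ext
      simp }
  have hφcont : Continuous φ := by
    have h0 : FiniteDimensional ℝ C(spectrum ℝ A, ℝ) :=
      FiniteDimensional.of_injective (ContinuousMap.coeFnLinearMap ℝ (M := ℝ)) DFunLike.coe_injective
    exact LinearMap.continuous_of_finiteDimensional (φ : C(spectrum ℝ A, ℝ) →ₗ[ℝ] Matrix n n ℂ)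
  have hφid : φ (ContinuousMap.restrict (spectrum ℝ A) (ContinuousMap.id ℝ)) = A := by
    show (U : Matrix n n ℂ) * diagonal _ * star (U : Matrix n n ℂ) = A
    conv_rhs => rw [hAdef]
    congr!
  have hcfcHom : cfcHom hA (R := ℝ) = φ := cfcHom_eq_of_continuous_of_map_id hA φ hφcont hφid
  have hcont : ContinuousOn f (spectrum ℝ A) := by
    rw [continuousOn_iff_continuous_restrict]
    have : Finite (spectrum ℝ A) := hfin
    exact continuous_of_discreteTopology
  rw [cfc_apply f A hA hcont, hcfcHom]
  show (U : Matrix n n ℂ) * diagonal _ * star (U : Matrix n n ℂ) = _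
  congr!

/-- Spectral decomposition in the form used by `cfc_conj_diag`. -/
lemma herm_decomp {A : Matrix n n ℂ} (hA : A.IsHermitian) :
    A = (hA.eigenvectorUnitary : Matrix n n ℂ) * diagonal (fun i => (hA.eigenvalues i : ℂ))
        * star (hA.eigenvectorUnitary : Matrix n n ℂ) := by
  conv_lhs => rw [hA.spectral_theorem]
  rfl

lemma cfc_herm {A : Matrix n n ℂ} (hA : A.IsHermitian) (f : ℝ → ℝ) :
    cfc f A = (hA.eigenvectorUnitary : Matrix n n ℂ)
        * diagonal (fun i => (f (hA.eigenvalues i) : ℂ))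
        * star (hA.eigenvectorUnitary : Matrix n n ℂ) := by
  conv_lhs => rw [herm_decomp hA]
  exact cfc_conj_diag hA.eigenvectorUnitary _ f

lemma trace_conj_unitary (U : unitary (Matrix n n ℂ)) (D : Matrix n n ℂ) :
    ((U : Matrix n n ℂ) * D * star (U : Matrix n n ℂ)).trace = D.trace := by
  rw [Matrix.trace_mul_cycle, Unitary.star_mul_self_of_mem (SetLike.coe_mem U), one_mul]

lemma trace_mexp {A : Matrix n n ℂ} (hA : A.IsHermitian) :
    (mexp A).trace = ((∑ i, Real.exp (hA.eigenvalues i) : ℝ) : ℂ) := by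
  unfold mexp
  rw [cfc_herm hA, trace_conj_unitary, trace_diagonal]
  push_cast
  rfl

section Kron

variable {m : Type*} [Fintype m] [DecidableEq m]

lemma star_kron (U : Matrix n n ℂ) (V : Matrix m m ℂ) :
    star (U ⊗ₖ V) = star U ⊗ₖ star V := by
  ext ⟨i, k⟩ ⟨j, l⟩
  simp [conjTranspose_apply, mul_comm]

lemma kron_mem_unitary {U : Matrix n n ℂ} {V : Matrix m m ℂ}
    (hU : U ∈ unitary (Matrix n n ℂ)) (hV : V ∈ unitary (Matrix m m ℂ)) :
    U ⊗ₖ V ∈ unitary (Matrix (n × m) (n × m) ℂ) := by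
  rw [Unitary.mem_iff] at hU hV ⊢
  rw [star_kron]
  constructor
  · rw [← Matrix.mul_kronecker_mul, hU.1, hV.1, Matrix.one_kronecker_one]
  · rw [← Matrix.mul_kronecker_mul, hU.2, hV.2, Matrix.one_kronecker_one]

lemma conj_kron_sum (U : Matrix n n ℂ) (V : Matrix m m ℂ) (d1 : n → ℝ) (d2 : m → ℝ)
    (hU : U ∈ unitary (Matrix n n ℂ)) (hV : V ∈ unitary (Matrix m m ℂ)) :
    (U ⊗ₖ V) * diagonal (fun p : n × m => ((d1 p.1 + d2 p.2 : ℝ) : ℂ)) * star (U ⊗ₖ V)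
      = (U * diagonal (fun i => (d1 i : ℂ)) * star U) ⊗ₖ (1 : Matrix m m ℂ)
        + (1 : Matrix n n ℂ) ⊗ₖ (V * diagonal (fun j => (d2 j : ℂ)) * star V) := by
  have h1 : (U * diagonal (fun i => (d1 i : ℂ)) * star U) ⊗ₖ (1 : Matrix m m ℂ)
      = (U ⊗ₖ V) * (diagonal (fun i => (d1 i : ℂ)) ⊗ₖ (1 : Matrix m m ℂ)) * star (U ⊗ₖ V) := by
    rw [star_kron, ← Matrix.mul_kronecker_mul, ← Matrix.mul_kronecker_mul]
    congr 1
    rw [mul_one, Unitary.mul_star_self_of_mem hV]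
  have h2 : (1 : Matrix n n ℂ) ⊗ₖ (V * diagonal (fun j => (d2 j : ℂ)) * star V)
      = (U ⊗ₖ V) * ((1 : Matrix n n ℂ) ⊗ₖ diagonal (fun j => (d2 j : ℂ))) * star (U ⊗ₖ V) := by
    rw [star_kron, ← Matrix.mul_kronecker_mul, ← Matrix.mul_kronecker_mul]
    congr 1
    rw [mul_one, Unitary.mul_star_self_of_mem hU]
  rw [h1, h2, ← add_mul, ← mul_add]
  congr 2
  rw [show (1 : Matrix m m ℂ) = diagonal (fun _ => (1:ℂ)) by simp,
    show (1 : Matrix n n ℂ) = diagonal (fun _ => (1:ℂ)) by simp,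
    Matrix.diagonal_kronecker_diagonal, Matrix.diagonal_kronecker_diagonal]
  ext ⟨i, j⟩ ⟨k, l⟩
  by_cases h1 : i = k <;> by_cases h2 : j = l <;>
    simp [diagonal_apply, Prod.ext_iff, h1, h2]

/-- `mexp` of a "commuting sum" factorises as a Kronecker product. -/
lemma cfc_exp_add_kron {A : Matrix n n ℂ} {B : Matrix m m ℂ}
    (hA : A.IsHermitian) (hB : B.IsHermitian) :
    cfc Real.exp (A ⊗ₖ (1 : Matrix m m ℂ) + (1 : Matrix n n ℂ) ⊗ₖ B)
      = cfc Real.exp A ⊗ₖ cfc Real.exp B := by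
  have hUA := (hA.eigenvectorUnitary).2
  have hUB := (hB.eigenvectorUnitary).2
  rw [herm_decomp hA, herm_decomp hB, ← conj_kron_sum _ _ _ _ hUA hUB,
    cfc_conj_diag ⟨_, kron_mem_unitary hUA hUB⟩,
    cfc_conj_diag ⟨_, hUA⟩, cfc_conj_diag ⟨_, hUB⟩]
  rw [star_kron, Matrix.mul_kronecker_mul, Matrix.mul_kronecker_mul,
    Matrix.diagonal_kronecker_diagonal]
  congr 2
  congr 1
  simp [Real.exp_add]

end Kron

section Reindex

variable {p q : Type*} [Fintype p] [DecidableEq p] [Fintype q] [DecidableEq q]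

lemma reindex_mul (e : p ≃ q) (M N : Matrix p p ℂ) :
    reindex e e M * reindex e e N = reindex e e (M * N) := by
  rw [reindex_apply, reindex_apply, reindex_apply, submatrix_mul_equiv]

lemma reindex_star (e : p ≃ q) (M : Matrix p p ℂ) :
    star (reindex e e M) = reindex e e (star M) := by
  rw [reindex_apply, reindex_apply, star_eq_conjTranspose, star_eq_conjTranspose,
    conjTranspose_submatrix]

lemma reindex_add (e : p ≃ q) (M N : Matrix p p ℂ) :
    reindex e e (M + N) = reindex e e M + reindex e e N := by
  simp [reindex_apply, submatrix_add]

lemma reindex_mem_unitary (e : p ≃ q) {W : Matrix p p ℂ} (hW : W ∈ unitary (Matrix p p ℂ)) :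
    reindex e e W ∈ unitary (Matrix q q ℂ) := by
  rw [Unitary.mem_iff] at hW ⊢
  constructor
  · rw [reindex_star, reindex_mul, hW.1, reindex_apply, submatrix_one_equiv]
  · rw [reindex_star, reindex_mul, hW.2, reindex_apply, submatrix_one_equiv]

lemma reindex_conj_diag (e : p ≃ q) (W : Matrix p p ℂ) (g : p → ℝ) :
    reindex e e (W * diagonal (fun i => (g i : ℂ)) * star W)
      = reindex e e W * diagonal (fun j => (g (e.symm j) : ℂ)) * star (reindex e e W) := by
  have h1 : reindex e e (W * diagonal (fun i => (g i : ℂ)) * star W)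
      = reindex e e W * reindex e e (diagonal fun i => (g i : ℂ)) * reindex e e (star W) := by
    rw [reindex_mul, reindex_mul]
  rw [h1, ← reindex_star]
  congr 2
  rw [reindex_apply, submatrix_diagonal_equiv]
  rfl

end Reindex

section Structural

variable {a' b' : Type*} [Fintype a'] [DecidableEq a'] [Fintype b'] [DecidableEq b']

local notation "ee" => Equiv.prodProdProdComm a b a' b'

lemma ptraceB_reindex_kron (X : Matrix (a × b) (a × b) ℂ) (Y : Matrix (a' × b') (a' × b') ℂ) :
    ptraceB (reindex ee ee (X ⊗ₖ Y)) = ptraceB X ⊗ₖ ptraceB Y := by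
  ext ⟨i, i'⟩ ⟨j, j'⟩
  simp [ptraceB, Fintype.sum_prod_type, Finset.sum_mul, Finset.mul_sum, mul_comm]
  rw [Finset.sum_comm]

lemma ptraceA_reindex_kron (X : Matrix (a × b) (a × b) ℂ) (Y : Matrix (a' × b') (a' × b') ℂ) :
    ptraceA (reindex ee ee (X ⊗ₖ Y)) = ptraceA X ⊗ₖ ptraceA Y := by
  ext ⟨k, k'⟩ ⟨l, l'⟩
  simp [ptraceA, Fintype.sum_prod_type, Finset.sum_mul, Finset.mul_sum, mul_comm]
  rw [Finset.sum_comm]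

lemma reindex_kron_mul (X X' : Matrix (a × b) (a × b) ℂ) (Y Y' : Matrix (a' × b') (a' × b') ℂ) :
    reindex ee ee (X ⊗ₖ Y) * reindex ee ee (X' ⊗ₖ Y')
      = reindex ee ee ((X * X') ⊗ₖ (Y * Y')) := by
  rw [reindex_mul, Matrix.mul_kronecker_mul]

lemma kron_kron_reindex (M : Matrix a a ℂ) (N : Matrix a' a' ℂ) (P : Matrix b b ℂ)
    (Q : Matrix b' b' ℂ) :
    (M ⊗ₖ N) ⊗ₖ (P ⊗ₖ Q) = reindex ee ee ((M ⊗ₖ P) ⊗ₖ (N ⊗ₖ Q)) := by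
  ext ⟨⟨i, i'⟩, ⟨k, k'⟩⟩ ⟨⟨j, j'⟩, ⟨l, l'⟩⟩
  simp [Equiv.prodProdProdComm]
  ring

lemma ptraceA_kron_one (M : Matrix a a ℂ) :
    ptraceA (M ⊗ₖ (1 : Matrix b b ℂ)) = M.trace • (1 : Matrix b b ℂ) := by
  ext k l
  simp [ptraceA, Matrix.trace, Matrix.one_apply, Matrix.diag]

lemma ptraceA_add (P Q : Matrix (a × b) (a × b) ℂ) :
    ptraceA (P + Q) = ptraceA P + ptraceA Q := by
  ext k l
  simp [ptraceA, Finset.sum_add_distrib]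

lemma trace_ptraceB (ρ : Matrix (a × b) (a × b) ℂ) : (ptraceB ρ).trace = ρ.trace := by
  simp [ptraceB, Matrix.trace, Matrix.diag, Fintype.sum_prod_type]

lemma ptraceA_star (N : Matrix (a × b) (a × b) ℂ) : star (ptraceA N) = ptraceA (star N) := by
  ext k l
  simp [ptraceA, conjTranspose_apply, map_sum]

lemma ptraceB_star (N : Matrix (a × b) (a × b) ℂ) : star (ptraceB N) = ptraceB (star N) := by
  ext i j
  simp [ptraceB, conjTranspose_apply, map_sum]

lemma ptraceA_comm (M : Matrix a a ℂ) (L : Matrix (a × b) (a × b) ℂ) :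
    ptraceA ((M ⊗ₖ (1 : Matrix b b ℂ)) * L) = ptraceA (L * (M ⊗ₖ (1 : Matrix b b ℂ))) := by
  ext k l
  simp [ptraceA, Matrix.mul_apply, Fintype.sum_prod_type, Matrix.one_apply]
  rw [Finset.sum_comm]
  apply Finset.sum_congr rfl; intro i _
  simp [mul_comm]

/-- The operator `Xop` is Hermitian for a Hermitian full-rank state. -/
lemma Xop_isHermitian {ρ : Matrix (a × b) (a × b) ℂ} (hρ : ρ.IsHermitian) :
    (Xop ρ).IsHermitian := by
  have hm : IsSelfAdjoint (mlog ρ) := cfc_predicate Real.log ρ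
  have hpt : star (ptraceB ρ ⊗ₖ (1 : Matrix b b ℂ)) = ptraceB ρ ⊗ₖ (1 : Matrix b b ℂ) := by
    rw [star_kron, star_one, ptraceB_star, show star ρ = ρ from hρ]
  show star (Xop ρ) = Xop ρ
  unfold Xop
  rw [ptraceA_star, StarMul.star_mul, hm.star_eq, hpt, ← ptraceA_comm]

/-- `mlog` of the reindexed Kronecker product of positive-definite matrices. -/
lemma mlog_reindex_kron {X : Matrix (a × b) (a × b) ℂ} {Y : Matrix (a' × b') (a' × b') ℂ}
    (hX : X.PosDef) (hY : Y.PosDef) :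
    mlog (reindex ee ee (X ⊗ₖ Y))
      = reindex ee ee (mlog X ⊗ₖ (1 : Matrix (a' × b') (a' × b') ℂ)
          + (1 : Matrix (a × b) (a × b) ℂ) ⊗ₖ mlog Y) := by
  have hUX := (hX.1.eigenvectorUnitary).2
  have hUY := (hY.1.eigenvectorUnitary).2
  have hW : ((hX.1.eigenvectorUnitary : Matrix (a × b) (a × b) ℂ)
      ⊗ₖ (hY.1.eigenvectorUnitary : Matrix (a' × b') (a' × b') ℂ)) ∈ unitary _ :=
    kron_mem_unitary hUX hUY
  have hkron : X ⊗ₖ Y = ((hX.1.eigenvectorUnitary : Matrix (a × b) (a × b) ℂ)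
        ⊗ₖ (hY.1.eigenvectorUnitary : Matrix (a' × b') (a' × b') ℂ))
      * diagonal (fun p : (a × b) × (a' × b') =>
          ((hX.1.eigenvalues p.1 * hY.1.eigenvalues p.2 : ℝ) : ℂ))
      * star ((hX.1.eigenvectorUnitary : Matrix (a × b) (a × b) ℂ)
        ⊗ₖ (hY.1.eigenvectorUnitary : Matrix (a' × b') (a' × b') ℂ)) := by
    conv_lhs => rw [herm_decomp hX.1, herm_decomp hY.1]
    rw [Matrix.mul_kronecker_mul, Matrix.mul_kronecker_mul, Matrix.diagonal_kronecker_diagonal,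
      star_kron]
    congr 2
    congr 1
    funext p
    push_cast
    ring
  have hlhs : mlog (reindex ee ee (X ⊗ₖ Y))
      = (reindex ee ee ((hX.1.eigenvectorUnitary : Matrix (a × b) (a × b) ℂ)
          ⊗ₖ (hY.1.eigenvectorUnitary : Matrix (a' × b') (a' × b') ℂ)))
        * diagonal (fun j => ((Real.log (hX.1.eigenvalues ((Equiv.prodProdProdComm a b a' b').symm j).1
            * hY.1.eigenvalues ((Equiv.prodProdProdComm a b a' b').symm j).2) : ℝ) : ℂ))
        * star (reindex ee ee ((hX.1.eigenvectorUnitary : Matrix (a × b) (a × b) ℂ)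
          ⊗ₖ (hY.1.eigenvectorUnitary : Matrix (a' × b') (a' × b') ℂ))) := by
    unfold mlog
    rw [hkron, reindex_conj_diag, cfc_conj_diag ⟨_, reindex_mem_unitary ee hW⟩]
  have hrhs : reindex ee ee (mlog X ⊗ₖ (1 : Matrix (a' × b') (a' × b') ℂ)
        + (1 : Matrix (a × b) (a × b) ℂ) ⊗ₖ mlog Y)
      = (reindex ee ee ((hX.1.eigenvectorUnitary : Matrix (a × b) (a × b) ℂ)
          ⊗ₖ (hY.1.eigenvectorUnitary : Matrix (a' × b') (a' × b') ℂ)))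
        * diagonal (fun j => ((Real.log (hX.1.eigenvalues ((Equiv.prodProdProdComm a b a' b').symm j).1)
            + Real.log (hY.1.eigenvalues ((Equiv.prodProdProdComm a b a' b').symm j).2) : ℝ) : ℂ))
        * star (reindex ee ee ((hX.1.eigenvectorUnitary : Matrix (a × b) (a × b) ℂ)
          ⊗ₖ (hY.1.eigenvectorUnitary : Matrix (a' × b') (a' × b') ℂ))) := by
    unfold mlog
    rw [cfc_herm hX.1, cfc_herm hY.1, ← conj_kron_sum _ _ _ _ hUX hUY, reindex_conj_diag]
  rw [hlhs, hrhs]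
  congr 2
  congr 1
  funext j
  rw [Real.log_mul (ne_of_gt (hX.eigenvalues_pos _)) (ne_of_gt (hY.eigenvalues_pos _))]

end Structural

end Aux

/-- the umlaut-marginal of a tensor product factorises. -/
theorem umlautMarginal_tensor {a' b' : Type*} [Fintype a'] [DecidableEq a'] [Fintype b']
    [DecidableEq b'] (ρ : Matrix (a × b) (a × b) ℂ) (σ : Matrix (a' × b') (a' × b') ℂ)
    (hρ : ρ.PosDef) (hρt : ρ.trace = 1) (hσ : σ.PosDef) (hσt : σ.trace = 1) :
    umlautMarginal (Matrix.reindex (Equiv.prodProdProdComm a b a' b')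
        (Equiv.prodProdProdComm a b a' b') (ρ ⊗ₖ σ))
      = umlautMarginal ρ ⊗ₖ umlautMarginal σ := by
  have hXρ : (Xop ρ).IsHermitian := Xop_isHermitian hρ.1
  have hXσ : (Xop σ).IsHermitian := Xop_isHermitian hσ.1
  have hXop : Xop (Matrix.reindex (Equiv.prodProdProdComm a b a' b')
        (Equiv.prodProdProdComm a b a' b') (ρ ⊗ₖ σ))
      = Xop ρ ⊗ₖ (1 : Matrix b' b' ℂ) + (1 : Matrix b b ℂ) ⊗ₖ Xop σ := by
    unfold Xop
    rw [ptraceB_reindex_kron, mlog_reindex_kron hρ hσ,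
      show (1 : Matrix (b × b') (b × b') ℂ)
          = (1 : Matrix b b ℂ) ⊗ₖ (1 : Matrix b' b' ℂ) from (Matrix.one_kronecker_one).symm,
      kron_kron_reindex, reindex_add, mul_add, reindex_kron_mul, reindex_kron_mul,
      ptraceA_add, ptraceA_reindex_kron, ptraceA_reindex_kron, mul_one, mul_one,
      ptraceA_kron_one, ptraceA_kron_one, trace_ptraceB, trace_ptraceB, hρt, hσt, one_smul,
      one_smul]
  have hmexp : mexp (Xop (Matrix.reindex (Equiv.prodProdProdComm a b a' b')
        (Equiv.prodProdProdComm a b a' b') (ρ ⊗ₖ σ)))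
      = mexp (Xop ρ) ⊗ₖ mexp (Xop σ) := by
    unfold mexp
    rw [hXop]
    exact cfc_exp_add_kron hXρ hXσ
  have htR : ((mexp (Xop ρ) ⊗ₖ mexp (Xop σ)).trace).re
      = (mexp (Xop ρ)).trace.re * (mexp (Xop σ)).trace.re := by
    rw [Matrix.trace_kronecker, trace_mexp hXρ, trace_mexp hXσ]
    simp [← Complex.ofReal_mul]
  unfold umlautMarginal
  rw [hmexp, htR, mul_inv, Matrix.smul_kronecker, Matrix.kronecker_smul, smul_smul]

end
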